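/- Any pair (p, q) of rank-one orthogonal projections on ℂ² is unitarily conjugate to the pair (p_t, e) where p_t = [[t, √(t(1−t))],[√(t(1−t)), 1−t]] and e = [[1,0],[0,0]], for some t ∈ [0,1]. -/

import Mathlib

open Matrix Complex

lemma proj_form (p : Matrix (Fin 2) (Fin 2) ℂ)
    (hp : p.IsHermitian) (hp2 : p * p = p) (hpr : p.rank = 1) :
    ∃ a : ℝ, a ∈ Set.Icc (0:ℝ) 1 ∧ ∃ b : ℂ,
      b * (starRingEnd ℂ) b = ((a * (1 - a) : ℝ) : ℂ) ∧
      p = !![((a:ℝ) : ℂ), b; (starRingEnd ℂ) b, ((1 - a : ℝ) : ℂ)] := by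
  -- det = 0
  have hdet : p.det = 0 := by
    by_contra h
    have : IsUnit p := (Matrix.isUnit_iff_isUnit_det p).2 (Ne.isUnit h)
    have := Matrix.rank_of_isUnit p this
    rw [hpr] at this
    simp [Fintype.card_fin] at this
  have hne : p ≠ 0 := by
    intro h
    rw [h, Matrix.rank_zero] at hpr
    exact one_ne_zero hpr.symm
  set x := p 0 0 with hx
  set y := p 1 1 with hy
  set b := p 0 1 with hb
  have h10 : p 1 0 = (starRingEnd ℂ) b := by rw [← hp.apply 1 0]; rfl
  have hxr : (starRingEnd ℂ) x = x := hp.apply 0 0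
  have hyr : (starRingEnd ℂ) y = y := hp.apply 1 1
  have E00 : x * x + b * (starRingEnd ℂ) b = x := by
    have := congrFun (congrFun hp2 0) 0
    simpa [Matrix.mul_apply, Fin.sum_univ_two, h10, ← hx, ← hb] using this
  have E11 : (starRingEnd ℂ) b * b + y * y = y := by
    have := congrFun (congrFun hp2 1) 1
    simpa [Matrix.mul_apply, Fin.sum_univ_two, h10, ← hy, ← hb] using this
  have Edet : x * y - b * (starRingEnd ℂ) b = 0 := by
    have := hdet
    rw [Matrix.det_fin_two, h10] at this
    linear_combination this
  -- trace = 1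
  have htr : x + y = 1 := by
    by_contra h
    have hx0 : x = 0 := by
      have : x * (x + y - 1) = 0 := by linear_combination E00 + Edet
      rcases mul_eq_zero.1 this with h' | h'
      · exact h'
      · exact absurd (by linear_combination h') h
    have hy0 : y = 0 := by
      have : y * (x + y - 1) = 0 := by linear_combination E11 + Edet
      rcases mul_eq_zero.1 this with h' | h'
      · exact h'
      · exact absurd (by linear_combination h') h
    have hb0 : b = 0 := by
      have : b * (starRingEnd ℂ) b = 0 := by linear_combination -Edet + hx0*y
      simpa [Complex.mul_conj, Complex.normSq_eq_zero] using this
    apply hne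
    ext i j
    fin_cases i <;> fin_cases j <;> simp [← hx, ← hy, ← hb, hx0, hy0, hb0]
    · rw [h10, hb0]; simp
  set a := x.re with ha
  have hxa : x = (a : ℂ) := by
    rw [Complex.ext_iff]
    constructor
    · rfl
    · have := congrArg Complex.im hxr
      simp at this
      simpa using (by linarith : x.im = 0)
  have hya : y = ((1 - a : ℝ) : ℂ) := by
    push_cast
    linear_combination htr - hxa
  have hnsq : b * (starRingEnd ℂ) b = ((a * (1 - a) : ℝ) : ℂ) := by
    have h1 : b * (starRingEnd ℂ) b = x * y := by linear_combination -Edet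
    rw [h1, hxa, hya]; push_cast; ring
  have hb2 : Complex.normSq b = a * (1 - a) := by
    have := hnsq
    rw [Complex.mul_conj] at this
    exact_mod_cast this
  have ha01 : a ∈ Set.Icc (0:ℝ) 1 := by
    have hE : a * a + Complex.normSq b = a := by
      have := congrArg Complex.re E00
      rw [hxa, Complex.mul_conj] at this
      simpa using this
    have hnn := Complex.normSq_nonneg b
    constructor <;> nlinarith
  refine ⟨a, ha01, b, hnsq, ?_⟩
  ext i j
  fin_cases i <;> fin_cases j <;>
    simp [← hx, ← hy, ← hb, hxa, hya, h10]

set_option maxHeartbeats 1000000 in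
lemma conj_to_e (s : ℝ) (hs : s ∈ Set.Icc (0:ℝ) 1) (c : ℂ)
    (hc : c * (starRingEnd ℂ) c = ((s * (1 - s) : ℝ) : ℂ)) :
    ∃ V ∈ Matrix.unitaryGroup (Fin 2) ℂ,
      V * !![((s:ℝ) : ℂ), c; (starRingEnd ℂ) c, ((1 - s : ℝ) : ℂ)] * star V
        = !![1, 0; 0, 0] := by
  by_cases hs0 : s = 0
  · have hc0 : c = 0 := by
      have : c * (starRingEnd ℂ) c = 0 := by rw [hc, hs0]; norm_num
      simpa [Complex.mul_conj, Complex.normSq_eq_zero] using this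
    refine ⟨!![0,1;1,0], ?_, ?_⟩
    · rw [Matrix.mem_unitaryGroup_iff]
      ext i j
      fin_cases i <;> fin_cases j <;>
        simp [Matrix.mul_apply, Fin.sum_univ_two, Matrix.star_apply]
    · subst hs0
      have hsV : star (!![(0:ℂ),1;1,0]) = !![0,1;1,0] := by
        ext i j
        fin_cases i <;> fin_cases j <;> simp [Matrix.star_apply]
      rw [hsV, hc0]
      ext i j
      fin_cases i <;> fin_cases j <;> simp [Matrix.mul_fin_two]
  · have hsp : 0 < s := lt_of_le_of_ne hs.1 (Ne.symm hs0)
    set r := Real.sqrt s with hr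
    have hr2 : (r:ℝ)^2 = s := Real.sq_sqrt hs.1
    have hrpos : 0 < r := Real.sqrt_pos.2 hsp
    have hrne : ((r:ℂ)) ≠ 0 := by exact_mod_cast hrpos.ne'
    set k := (starRingEnd ℂ) c with hk
    have hck : c * k = (r:ℂ)^2 * (1 - (r:ℂ)^2) := by
      rw [hc]
      push_cast [← hr2]
      ring
    refine ⟨!![(r:ℂ), c/r; -k/r, (r:ℂ)], ?_, ?_⟩
    · rw [Matrix.mem_unitaryGroup_iff]
      have hsV : star (!![(r:ℂ), c/r; -k/r, (r:ℂ)]) = !![(r:ℂ), -c/r; k/r, (r:ℂ)] := by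
        ext i j
        fin_cases i <;> fin_cases j <;>
          simp [Matrix.star_apply, hk, map_div₀]
      rw [hsV, Matrix.mul_fin_two]
      ext i j
      fin_cases i <;> fin_cases j <;>
        simp only [Matrix.cons_val', Matrix.cons_val_zero, Matrix.cons_val_one,
            Matrix.head_cons, Matrix.head_fin_const, Matrix.empty_val',
            Matrix.cons_val_fin_one, Matrix.one_apply, Fin.isValue, if_true, if_false,
            Fin.zero_eta, Fin.mk_one, reduceIte, Matrix.of_apply]
      · field_simp; linear_combination hck
      · field_simp; simp
      · field_simp; simp
      · field_simp; linear_combination hck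
    · have hsV : star (!![(r:ℂ), c/r; -k/r, (r:ℂ)]) = !![(r:ℂ), -c/r; k/r, (r:ℂ)] := by
        ext i j
        fin_cases i <;> fin_cases j <;>
          simp [Matrix.star_apply, hk, map_div₀]
      rw [hsV, Matrix.mul_fin_two, Matrix.mul_fin_two]
      have hs' : ((s:ℝ):ℂ) = (r:ℂ)^2 := by push_cast [← hr2]; ring
      have hs'' : ((1 - s : ℝ):ℂ) = 1 - (r:ℂ)^2 := by push_cast [← hr2]; ring
      rw [hs', hs'']
      ext i j
      fin_cases i <;> fin_cases j <;>
        simp only [Matrix.cons_val', Matrix.cons_val_zero, Matrix.cons_val_one,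
            Matrix.head_cons, Matrix.head_fin_const, Matrix.empty_val',
            Matrix.cons_val_fin_one, Fin.isValue, Matrix.of_apply, Fin.zero_eta, Fin.mk_one]
      · field_simp; linear_combination (1 + (r:ℂ)^2) * hck
      · field_simp; linear_combination (-c) * hck
      · field_simp; linear_combination (-k) * hck
      · field_simp; linear_combination (-1 : ℂ) * hck


set_option maxHeartbeats 1000000 in
theorem stmt_15 (p q : Matrix (Fin 2) (Fin 2) ℂ)
    (hp : p.IsHermitian) (hp2 : p * p = p) (hpr : p.rank = 1)
    (hq : q.IsHermitian) (hq2 : q * q = q) (hqr : q.rank = 1) :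
    ∃ t ∈ Set.Icc (0:ℝ) 1, ∃ U ∈ Matrix.unitaryGroup (Fin 2) ℂ,
      U * p * star U
        = !![(t : ℂ), (Real.sqrt (t*(1-t)) : ℝ); (Real.sqrt (t*(1-t)) : ℝ), ((1 - t : ℝ) : ℂ)] ∧
      U * q * star U = !![1, 0; 0, 0] := by
  obtain ⟨s, hs, c, hc, hqf⟩ := proj_form q hq hq2 hqr
  obtain ⟨V, hV, hVq⟩ := conj_to_e s hs c hc
  rw [← hqf] at hVq
  have hVs : star V * V = 1 := Matrix.mem_unitaryGroup_iff'.1 hV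
  have hVs' : V * star V = 1 := Matrix.mem_unitaryGroup_iff.1 hV
  have hVdet : IsUnit V.det := by
    apply IsUnit.of_mul_eq_one (star V).det
    rw [← Matrix.det_mul, hVs', Matrix.det_one]
  have hVsdet : IsUnit (star V).det := by
    apply IsUnit.of_mul_eq_one V.det
    rw [← Matrix.det_mul, hVs, Matrix.det_one]
  set p' := V * p * star V with hp'def
  have hp'H : p'.IsHermitian := by
    show p'ᴴ = p'
    rw [hp'def]
    simp only [Matrix.star_eq_conjTranspose, Matrix.conjTranspose_mul,
      Matrix.conjTranspose_conjTranspose, hp.eq, Matrix.mul_assoc]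
  have hp'2 : p' * p' = p' := by
    rw [hp'def]
    calc V * p * star V * (V * p * star V)
        = V * p * (star V * V) * p * star V := by simp only [Matrix.mul_assoc]
      _ = V * (p * p) * star V := by rw [hVs]; simp only [Matrix.mul_assoc, Matrix.mul_one]
      _ = V * p * star V := by rw [hp2, Matrix.mul_assoc]
  have hp'r : p'.rank = 1 := by
    rw [hp'def, Matrix.rank_mul_eq_left_of_isUnit_det _ _ hVsdet,
      Matrix.rank_mul_eq_right_of_isUnit_det _ _ hVdet, hpr]
  obtain ⟨t, ht, b, hbc, hp'f⟩ := proj_form p' hp'H hp'2 hp'r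
  have hns : Complex.normSq b = t * (1 - t) := by
    have := hbc
    rw [Complex.mul_conj] at this
    exact_mod_cast this
  set ζ : ℂ := if b = 0 then 1 else (starRingEnd ℂ) b / (‖b‖ : ℝ) with hζ
  have hζζ : ζ * (starRingEnd ℂ) ζ = 1 := by
    by_cases hb0 : b = 0
    · simp [hζ, hb0]
    · have habs : ((‖b‖ : ℝ) : ℂ) ≠ 0 := by
        simpa using (norm_ne_zero_iff.mpr hb0)
      rw [hζ, if_neg hb0]
      rw [map_div₀, Complex.conj_conj, Complex.conj_ofReal]
      field_simp
      rw [mul_comm ((starRingEnd ℂ) b) b, Complex.mul_conj]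
      push_cast [← Complex.sq_norm]
      ring
  have hζb : ζ * b = ((Real.sqrt (t * (1 - t)) : ℝ) : ℂ) := by
    by_cases hb0 : b = 0
    · have h0 : t * (1 - t) = 0 := by rw [← hns, hb0]; simp
      rw [hb0, h0]
      simp
    · have habs : ((‖b‖ : ℝ) : ℂ) ≠ 0 := by
        simpa using (norm_ne_zero_iff.mpr hb0)
      rw [hζ, if_neg hb0, ← hns, ← Complex.norm_def]
      field_simp
      rw [mul_comm ((starRingEnd ℂ) b) b, Complex.mul_conj]
      push_cast [← Complex.sq_norm]
      ring
  have hζbconj : (starRingEnd ℂ) ζ * (starRingEnd ℂ) b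
      = ((Real.sqrt (t * (1 - t)) : ℝ) : ℂ) := by
    have := congrArg (starRingEnd ℂ) hζb
    rw [_root_.map_mul, Complex.conj_ofReal] at this
    exact this
  set D : Matrix (Fin 2) (Fin 2) ℂ := !![ζ, 0; 0, 1] with hD
  have hsD : star D = !![(starRingEnd ℂ) ζ, 0; 0, 1] := by
    ext i j
    fin_cases i <;> fin_cases j <;> simp [hD, Matrix.star_apply]
  have hDmem : D ∈ Matrix.unitaryGroup (Fin 2) ℂ := by
    rw [Matrix.mem_unitaryGroup_iff, hsD, hD, Matrix.mul_fin_two]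
    ext i j
    fin_cases i <;> fin_cases j <;> simp [hζζ]
  refine ⟨t, ht, D * V, mul_mem hDmem hV, ?_, ?_⟩
  · have h1 : D * V * p * star (D * V) = D * p' * star D := by
      rw [Matrix.star_mul, hp'def]
      simp only [Matrix.mul_assoc]
    rw [h1, hp'f, hsD, hD, Matrix.mul_fin_two, Matrix.mul_fin_two]
    ext i j
    fin_cases i <;> fin_cases j <;>
      simp only [Matrix.of_apply, Matrix.cons_val', Matrix.cons_val_zero, Matrix.cons_val_one,
        Matrix.head_cons, Matrix.head_fin_const, Matrix.empty_val',
        Matrix.cons_val_fin_one, Fin.zero_eta, Fin.mk_one] <;>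
      first
        | rfl
        | linear_combination ((t:ℝ):ℂ) * hζζ
        | linear_combination hζb
        | linear_combination hζbconj
        | ring
  · have h1 : D * V * q * star (D * V) = D * (V * q * star V) * star D := by
      rw [Matrix.star_mul]
      simp only [Matrix.mul_assoc]
    rw [h1, hVq, hsD, hD, Matrix.mul_fin_two, Matrix.mul_fin_two]
    ext i j
    fin_cases i <;> fin_cases j <;>
      simp only [Matrix.of_apply, Matrix.cons_val', Matrix.cons_val_zero, Matrix.cons_val_one,
        Matrix.head_cons, Matrix.head_fin_const, Matrix.empty_val',
        Matrix.cons_val_fin_one, Fin.zero_eta, Fin.mk_one] <;>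
      first
        | rfl
        | linear_combination hζζ
        | ring
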